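/- Let p > 2 and let a, b ∈ ℝ^n. Then ⟨|a|^{p-2} a - |b|^{p-2} b, a - b⟩ ≥ 2^{2-p} |a - b|^p. -/

import Mathlib

open scoped RealInnerProductSpace

private lemma scalar_key (p x y D : ℝ) (hp : 2 < p) (hy : 0 ≤ y) (hxy : y ≤ x)
    (hD : 0 ≤ D) (hDle : D ≤ x + y) :
    2 ^ (2 - p) * D ^ p ≤
      (x ^ (p - 2) + y ^ (p - 2)) / 2 * D ^ 2
        + (x ^ (p - 2) - y ^ (p - 2)) / 2 * (x ^ 2 - y ^ 2) := by
  have hx : 0 ≤ x := hy.trans hxy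
  have hp2 : (0 : ℝ) < p - 2 := by linarith
  have hAB : y ^ (p - 2) ≤ x ^ (p - 2) := Real.rpow_le_rpow hy hxy hp2.le
  rcases eq_or_lt_of_le hD with h0 | hDpos
  · have : D = 0 := h0.symm
    subst this
    rw [Real.zero_rpow (by linarith : p ≠ 0)]
    have h1 : 0 ≤ (x ^ (p - 2) - y ^ (p - 2)) / 2 * (x ^ 2 - y ^ 2) := by
      apply mul_nonneg (by linarith)
      nlinarith
    nlinarith
  · have hxy0 : 0 < x + y := lt_of_lt_of_le hDpos hDle
    set A := x ^ (p - 2) with hA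
    set B := y ^ (p - 2) with hB
    set M := (x + y) / 2 with hM
    have hM0 : 0 < M := by positivity
    -- step 1 : 2^(2-p) * D^p = (D/2)^(p-2) * D^2
    have e1 : 2 ^ (2 - p) * D ^ p = (D / 2) ^ (p - 2) * D ^ 2 := by
      rw [Real.div_rpow hD (by norm_num : (0:ℝ) ≤ 2)]
      rw [show p = (p - 2) + 2 by ring, Real.rpow_add hDpos]
      rw [show ((2:ℝ) - ((p-2)+2)) = -(p-2) by ring, Real.rpow_neg (by norm_num : (0:ℝ) ≤ 2)]
      rw [show D ^ (2:ℝ) = D ^ 2 by rw [show (2:ℝ) = ((2:ℕ):ℝ) by norm_num, Real.rpow_natCast]]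
      field_simp
      rw [show p - 2 + 2 - 2 = p - 2 by ring]; ring
    have e2 : (D / 2) ^ (p - 2) ≤ M ^ (p - 2) :=
      Real.rpow_le_rpow (by positivity) (by rw [hM]; linarith) hp2.le
    -- power mean inequality
    have hPM : M ^ (p - 1) ≤ (x ^ (p - 1) + y ^ (p - 1)) / 2 := by
      have hc := (convexOn_rpow (by linarith : (1:ℝ) ≤ p - 1)).2
        (Set.mem_Ici.mpr hx) (Set.mem_Ici.mpr hy)
        (by norm_num : (0:ℝ) ≤ 1/2) (by norm_num : (0:ℝ) ≤ 1/2) (by norm_num)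
      simp only [smul_eq_mul] at hc
      calc M ^ (p - 1) = (1/2 * x + 1/2 * y) ^ (p - 1) := by rw [hM]; ring_nf
        _ ≤ 1/2 * x ^ (p - 1) + 1/2 * y ^ (p - 1) := hc
        _ = (x ^ (p - 1) + y ^ (p - 1)) / 2 := by ring
    have hAx : A * x = x ^ (p - 1) := by
      rw [hA, show p - 1 = (p - 2) + 1 by ring,
        Real.rpow_add_of_nonneg hx hp2.le (by norm_num : (0:ℝ) ≤ 1), Real.rpow_one]
    have hBy : B * y = y ^ (p - 1) := by
      rw [hB, show p - 1 = (p - 2) + 1 by ring,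
        Real.rpow_add_of_nonneg hy hp2.le (by norm_num : (0:ℝ) ≤ 1), Real.rpow_one]
    have hMM : M ^ (p - 2) * M = M ^ (p - 1) := by
      rw [show p - 1 = (p - 2) + 1 by ring,
        Real.rpow_add_of_nonneg hM0.le hp2.le (by norm_num : (0:ℝ) ≤ 1), Real.rpow_one]
    -- M^(p-2) * (x+y) ≤ A*x + B*y
    have hkey : M ^ (p - 2) * (x + y) ≤ A * x + B * y := by
      have : M ^ (p - 2) * (x + y) = 2 * M ^ (p - 1) := by
        rw [← hMM, hM]; ring
      rw [this, hAx, hBy]; linarith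
    -- final combination
    have hSq : D ^ 2 ≤ (x + y) ^ 2 := by nlinarith
    have h1 : 0 ≤ (A - B) * (x - y) * ((x + y) ^ 2 - D ^ 2) := by
      apply mul_nonneg (mul_nonneg (by linarith) (by linarith)) (by linarith)
    have h2 : 0 ≤ (A * x + B * y - M ^ (p - 2) * (x + y)) * D ^ 2 := by
      apply mul_nonneg (by linarith) (by positivity)
    have hfin : M ^ (p - 2) * D ^ 2 * (x + y) ≤
        ((A + B) / 2 * D ^ 2 + (A - B) / 2 * (x ^ 2 - y ^ 2)) * (x + y) := by
      nlinarith [h1, h2]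
    have := (mul_le_mul_iff_left₀ hxy0).mp hfin
    calc 2 ^ (2 - p) * D ^ p = (D / 2) ^ (p - 2) * D ^ 2 := e1
      _ ≤ M ^ (p - 2) * D ^ 2 := by
          apply mul_le_mul_of_nonneg_right e2 (by positivity)
      _ ≤ _ := this

theorem pLaplacian_strong_monotone_explicit (p : ℝ) (hp : p > 2) (n : ℕ)
    (a b : EuclideanSpace ℝ (Fin n)) :
    ⟪(‖a‖ ^ (p - 2)) • a - (‖b‖ ^ (p - 2)) • b, a - b⟫ ≥
      (2 : ℝ) ^ (2 - p) * ‖a - b‖ ^ p := by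
  wlog hba : ‖b‖ ≤ ‖a‖ with H
  · have h := H p hp n b a (le_of_not_ge hba)
    have e1 : (‖a‖ ^ (p - 2)) • a - (‖b‖ ^ (p - 2)) • b
        = -((‖b‖ ^ (p - 2)) • b - (‖a‖ ^ (p - 2)) • a) := by abel
    have e2 : a - b = -(b - a) := by abel
    rw [e1, e2, inner_neg_neg, norm_neg]
    exact h
  · have expand : ⟪(‖a‖ ^ (p - 2)) • a - (‖b‖ ^ (p - 2)) • b, a - b⟫
        = (‖a‖ ^ (p - 2)) * ‖a‖ ^ 2 + (‖b‖ ^ (p - 2)) * ‖b‖ ^ 2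
          - ((‖a‖ ^ (p - 2)) + (‖b‖ ^ (p - 2))) * ⟪a, b⟫ := by
      simp only [inner_sub_left, inner_sub_right, real_inner_smul_left,
        real_inner_self_eq_norm_sq, real_inner_comm b a]
      ring
    have hnsq : ‖a - b‖ ^ 2 = ‖a‖ ^ 2 - 2 * ⟪a, b⟫ + ‖b‖ ^ 2 := norm_sub_sq_real a b
    have hkey := scalar_key p ‖a‖ ‖b‖ ‖a - b‖ hp (norm_nonneg b) hba
      (norm_nonneg _) (norm_sub_le a b)
    have hid : (‖a‖ ^ (p - 2) + ‖b‖ ^ (p - 2)) / 2 * ‖a - b‖ ^ 2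
        + (‖a‖ ^ (p - 2) - ‖b‖ ^ (p - 2)) / 2 * (‖a‖ ^ 2 - ‖b‖ ^ 2)
        = (‖a‖ ^ (p - 2)) * ‖a‖ ^ 2 + (‖b‖ ^ (p - 2)) * ‖b‖ ^ 2
          - ((‖a‖ ^ (p - 2)) + (‖b‖ ^ (p - 2))) * ⟪a, b⟫ := by
      rw [hnsq]; ring
    rw [ge_iff_le, expand, ← hid]
    exact hkey
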